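/- Let X be an essentially bounded random variable and h an 𝓗-measurable essentially bounded random variable. Then M(hX|𝓗) = h⁺·M(X|𝓗) − h⁻·m(X|𝓗) P-a.s., where h⁺ = max(h,0) and h⁻ = max(−h,0). -/

import Mathlib

open MeasureTheory Filter

/-- A real random variable is essentially bounded w.r.t. the measure `P`. -/
def EssBdd {Ω : Type*} {F : MeasurableSpace Ω} (P : @Measure Ω F) (X : Ω → ℝ) : Prop :=
  ∃ C : ℝ, ∀ᵐ ω ∂P, |X ω| ≤ C

/-- `Y` is the conditional essential supremum `M(X|H)` of `X` given the sub-σ-algebra `H`: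
`Y` is `H`-measurable, essentially bounded, `X ≤ Y` a.s., and `Y` is a.s. below every
`H`-measurable `Z` with `X ≤ Z` a.s. -/
def IsCondEssSup {Ω : Type*} {F : MeasurableSpace Ω} (P : @Measure Ω F)
    (H : MeasurableSpace Ω) (X Y : Ω → ℝ) : Prop :=
  Measurable[H] Y ∧ EssBdd P Y ∧ (∀ᵐ ω ∂P, X ω ≤ Y ω) ∧
    ∀ Z : Ω → ℝ, Measurable[H] Z → (∀ᵐ ω ∂P, X ω ≤ Z ω) → ∀ᵐ ω ∂P, Y ω ≤ Z ω

/-- `Y` is the conditional essential infimum `m(X|H) = -M(-X|H)`. -/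
def IsCondEssInf {Ω : Type*} {F : MeasurableSpace Ω} (P : @Measure Ω F)
    (H : MeasurableSpace Ω) (X Y : Ω → ℝ) : Prop :=
  IsCondEssSup P H (fun ω => -X ω) (fun ω => -Y ω)

/-- For `H`-measurable essentially bounded `h`,
`M(hX|H) = h⁺ · M(X|H) − h⁻ · m(X|H)` a.s. -/
theorem condEssSup_mul_measurable_signed {Ω : Type*} [F : MeasurableSpace Ω]
    (P : Measure Ω) [IsProbabilityMeasure P] (H : MeasurableSpace Ω) (hH : H ≤ F)
    (X h MX mX MhX : Ω → ℝ) (hX : EssBdd P X) (hb : EssBdd P h)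
    (hm : Measurable[H] h)
    (hMX : IsCondEssSup P H X MX) (hmX : IsCondEssInf P H X mX)
    (hMhX : IsCondEssSup P H (fun ω => h ω * X ω) MhX) :
    MhX =ᵐ[P] fun ω => max (h ω) 0 * MX ω - max (-h ω) 0 * mX ω := by

  obtain ⟨measMX, _, hXleMX, hMXmin⟩ := hMX
  obtain ⟨measmX, _, hXlemX', hmXmax⟩ := hmX
  obtain ⟨measMhX, _, hXleMhX, hMhXmin⟩ := hMhX
  -- mX ≤ X a.s.
  have measmX' : Measurable[H] mX := by simpa [Pi.neg_def] using measmX.neg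
  have hmXleX : ∀ᵐ ω ∂P, mX ω ≤ X ω := by
    filter_upwards [hXlemX'] with ω hω
    linarith
  -- Direction 1: MhX ≤ Y a.s. via minimality
  have measY : Measurable[H] fun ω => max (h ω) 0 * MX ω - max (-h ω) 0 * mX ω := by
    exact ((hm.max measurable_const).mul measMX).sub ((hm.neg.max measurable_const).mul measmX')
  have hXleY : ∀ᵐ ω ∂P, h ω * X ω ≤ max (h ω) 0 * MX ω - max (-h ω) 0 * mX ω := by
    filter_upwards [hXleMX, hmXleX] with ω h1 h2
    rcases le_or_gt 0 (h ω) with hs | hs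
    · rw [max_eq_left hs, max_eq_right (by linarith)]
      have := mul_le_mul_of_nonneg_left h1 hs
      linarith
    · rw [max_eq_right hs.le, max_eq_left (by linarith)]
      have := mul_le_mul_of_nonpos_left h2 hs.le
      linarith
  have dir1 := hMhXmin _ measY hXleY
  -- Z for the positive part
  set Z : Ω → ℝ := fun ω => if 0 < h ω then MhX ω / h ω else MX ω with hZ
  have measZ : Measurable[H] Z := by
    exact Measurable.ite (measurableSet_lt measurable_const hm) (measMhX.div hm) measMX
  have hXleZ : ∀ᵐ ω ∂P, X ω ≤ Z ω := by
    filter_upwards [hXleMhX, hXleMX] with ω h1 h2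
    simp only [hZ]
    split_ifs with hs
    · rw [le_div_iff₀ hs, mul_comm]; exact h1
    · exact h2
  have e2 := hMXmin Z measZ hXleZ
  -- W for the negative part
  set W : Ω → ℝ := fun ω => if h ω < 0 then MhX ω / h ω else mX ω with hW
  have measW : Measurable[H] W := by
    exact Measurable.ite (measurableSet_lt hm measurable_const) (measMhX.div hm) measmX'
  have hnXlenW : ∀ᵐ ω ∂P, -X ω ≤ -W ω := by
    filter_upwards [hXleMhX, hmXleX] with ω h1 h2
    simp only [hW, neg_le_neg_iff]
    split_ifs with hs
    · rw [div_le_iff_of_neg hs, mul_comm]; exact h1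
    · exact h2
  have e3' := hmXmax _ measW.neg hnXlenW
  have e3 : ∀ᵐ ω ∂P, W ω ≤ mX ω := by
    filter_upwards [e3'] with ω hω
    linarith [Pi.neg_apply W ω]
  -- Direction 2: Y ≤ MhX a.s.
  have dir2 : ∀ᵐ ω ∂P, max (h ω) 0 * MX ω - max (-h ω) 0 * mX ω ≤ MhX ω := by
    filter_upwards [e2, e3, hXleMhX] with ω h1 h2 h3
    rcases lt_trichotomy (h ω) 0 with hs | hs | hs
    · rw [max_eq_right hs.le, max_eq_left (by linarith)]
      simp only [hW] at h2
      rw [if_pos hs, div_le_iff_of_neg hs] at h2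
      linarith [h2]
    · simp only [hs] at h3 ⊢
      simpa using h3
    · rw [max_eq_left hs.le, max_eq_right (by linarith)]
      simp only [hZ] at h1
      rw [if_pos hs, le_div_iff₀ hs] at h1
      linarith [h1]
  filter_upwards [dir1, dir2] with ω h1 h2
  exact le_antisymm h1 h2
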